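/- Let G be a finite group, let χ_σ and χ_μ be characters of irreducible finite-dimensional complex representations of G with degrees d_σ = χ_σ(1), d_μ = χ_μ(1), and let u be an element of the center of G. Then for every integer g ≥ 1: (1/|G|^{2g}) · ∑_{(x,y) ∈ G^{2g}} χ_σ(x_1) · χ_μ((∏_{i=1}^{g} x_i y_i x_i⁻¹ y_i⁻¹)·u⁻¹) = m · χ_μ(u⁻¹)/d_μ^{2g}, where m = (1/|G|) · ∑_{x ∈ G} χ_σ(x)·χ_μ(x)·χ_μ(x⁻¹) (the multiplicity D_{σμμ} of μ in σ ⊗ μ). -/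

import Mathlib

open LinearMap

section
set_option linter.unusedSectionVars false
set_option maxHeartbeats 1000000
variable {G : Type*} [Group G] [Fintype G]
variable {V : Type*} [AddCommGroup V] [Module ℂ V] [FiniteDimensional ℂ V] [Nontrivial V]

lemma my_schur (ρ : Representation ℂ G V)
    (hirr : ∀ W : Submodule ℂ V, (∀ g : G, W.map (ρ g) ≤ W) → W = ⊥ ∨ W = ⊤)
    (T : V →ₗ[ℂ] V) (hT : ∀ g : G, ρ g * T = T * ρ g) :
    ∃ c : ℂ, T = c • (1 : V →ₗ[ℂ] V) := by
  obtain ⟨c, hc⟩ := Module.End.exists_eigenvalue (T : Module.End ℂ V)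
  refine ⟨c, ?_⟩
  have hinv : ∀ g : G, (Module.End.eigenspace T c).map (ρ g) ≤ Module.End.eigenspace T c := by
    intro g w hw
    obtain ⟨v, hv, rfl⟩ := hw
    simp only [SetLike.mem_coe] at hv
    rw [Module.End.mem_eigenspace_iff] at hv ⊢
    have := congrArg (fun f => f v) (hT g)
    simp only [Module.End.mul_apply] at this
    rw [← this, hv, map_smul]
  rcases hirr _ hinv with h | h
  · exact absurd h hc
  · ext v
    have hv : v ∈ Module.End.eigenspace T c := h ▸ Submodule.mem_top
    simpa [Module.End.mem_eigenspace_iff] using hv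

lemma my_cyc (ρ : Representation ℂ G V) (s t : G) :
    LinearMap.trace ℂ V (ρ (s * t)) = LinearMap.trace ℂ V (ρ (t * s)) := by
  rw [map_mul ρ, map_mul ρ]
  exact LinearMap.trace_mul_comm ℂ (ρ s) (ρ t)

/-- characters are class functions -/
lemma my_class (ρ : Representation ℂ G V) (g x : G) :
    LinearMap.trace ℂ V (ρ (g * x * g⁻¹)) = LinearMap.trace ℂ V (ρ x) := by
  rw [my_cyc ρ (g * x) g⁻¹]
  congr 1
  group

lemma my_avg (ρ : Representation ℂ G V)
    (hirr : ∀ W : Submodule ℂ V, (∀ g : G, W.map (ρ g) ≤ W) → W = ⊥ ∨ W = ⊤)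
    (A : V →ₗ[ℂ] V) :
    ∑ x : G, ρ x * A * ρ x⁻¹ =
      ((Fintype.card G : ℂ) * LinearMap.trace ℂ V A / (Module.finrank ℂ V : ℂ)) •
        (1 : V →ₗ[ℂ] V) := by
  have hn : ((Module.finrank ℂ V : ℂ)) ≠ 0 := by
    exact_mod_cast (Module.finrank_pos (R := ℂ) (M := V)).ne'
  have hcomm : ∀ g : G, ρ g * (∑ x : G, ρ x * A * ρ x⁻¹) =
      (∑ x : G, ρ x * A * ρ x⁻¹) * ρ g := by
    intro g
    rw [Finset.mul_sum, Finset.sum_mul]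
    refine Fintype.sum_bijective (Equiv.mulLeft g) (Equiv.bijective _) _ _ ?_
    intro x
    simp only [Equiv.coe_mulLeft]
    have h1 : ρ g * (ρ x * A * ρ x⁻¹) = ρ (g * x) * A * ρ x⁻¹ := by
      rw [map_mul ρ g x, mul_assoc, mul_assoc, mul_assoc]
    have h2 : (g * x)⁻¹ * g = x⁻¹ := by group
    rw [h1]
    have h3 : ρ ((g*x)⁻¹) * ρ g = ρ x⁻¹ := by rw [← map_mul ρ, h2]
    rw [mul_assoc, mul_assoc, ← h3, mul_assoc]
  obtain ⟨c, hc⟩ := my_schur ρ hirr _ hcomm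
  have htr : LinearMap.trace ℂ V (∑ x : G, ρ x * A * ρ x⁻¹) =
      (Fintype.card G : ℂ) * LinearMap.trace ℂ V A := by
    rw [map_sum]
    have h4 : ∀ x : G, LinearMap.trace ℂ V (ρ x * A * ρ x⁻¹) = LinearMap.trace ℂ V A := by
      intro x
      rw [LinearMap.trace_mul_comm, ← mul_assoc, ← map_mul ρ]
      simp
    simp only [h4, Finset.sum_const, Finset.card_univ, nsmul_eq_mul]
  rw [hc] at htr ⊢
  rw [map_smul, smul_eq_mul] at htr
  have htr1 : LinearMap.trace ℂ V (1 : V →ₗ[ℂ] V) = (Module.finrank ℂ V : ℂ) :=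
    LinearMap.trace_one ℂ V
  rw [htr1] at htr
  congr 1
  rw [eq_div_iff hn, htr]
variable (ρ : Representation ℂ G V)

lemma my_orth (hirr : ∀ W : Submodule ℂ V, (∀ g : G, W.map (ρ g) ≤ W) → W = ⊥ ∨ W = ⊤) :
    ∑ x : G, LinearMap.trace ℂ V (ρ x) * LinearMap.trace ℂ V (ρ x⁻¹) =
      (Fintype.card G : ℂ) := by
  classical
  have hn : ((Module.finrank ℂ V : ℂ)) ≠ 0 := by
    exact_mod_cast (Module.finrank_pos (R := ℂ) (M := V)).ne'
  set n := Module.finrank ℂ V with hndef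
  let b : Module.Basis (Fin n) ℂ V := Module.finBasis ℂ V
  let M : G → Matrix (Fin n) (Fin n) ℂ := fun x => LinearMap.toMatrix b b (ρ x)
  have key : ∀ i j k l : Fin n,
      (∑ x : G, M x k i * M x⁻¹ j l) =
        ((Fintype.card G : ℂ) * (if i = j then 1 else 0) / (n : ℂ)) *
          (if k = l then 1 else 0) := by
    intro i j k l
    have h := my_avg ρ hirr (Matrix.toLin b b (Matrix.single i j (1:ℂ)))
    have h2 := congrArg (LinearMap.toMatrix b b) h
    rw [map_sum, map_smul] at h2
    have htrE : LinearMap.trace ℂ V (Matrix.toLin b b (Matrix.single i j (1:ℂ)))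
        = (if i = j then 1 else 0) := by
      rw [LinearMap.trace_eq_matrix_trace ℂ b, LinearMap.toMatrix_toLin]
      by_cases hij : i = j
      · subst hij; simp [Matrix.trace_single_eq_same]
      · simp [Matrix.trace_single_eq_of_ne (h := hij), hij]
    rw [htrE] at h2
    have h3 : ∀ x : G, LinearMap.toMatrix b b
        (ρ x * Matrix.toLin b b (Matrix.single i j (1:ℂ)) * ρ x⁻¹)
        = M x * Matrix.single i j (1:ℂ) * M x⁻¹ := by
      intro x
      rw [LinearMap.toMatrix_mul, LinearMap.toMatrix_mul, LinearMap.toMatrix_toLin]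
    simp only [h3, LinearMap.toMatrix_one] at h2
    have h4 := congrFun (congrFun h2 k) l
    rw [Matrix.sum_apply] at h4
    have h5 : ∀ x : G, (M x * Matrix.single i j (1:ℂ) * M x⁻¹) k l
        = M x k i * M x⁻¹ j l := by
      intro x
      rw [Matrix.mul_apply]
      rw [Finset.sum_eq_single j]
      · simp
      · intro q _ hq; simp [hq]
      · simp
    simp only [h5] at h4
    rw [h4]
    simp [Matrix.one_apply, mul_comm]
    rfl
  have hM : ∀ x : G, LinearMap.trace ℂ V (ρ x) = ∑ i : Fin n, M x i i := by
    intro x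
    rw [LinearMap.trace_eq_matrix_trace ℂ b]
    rfl
  calc ∑ x : G, LinearMap.trace ℂ V (ρ x) * LinearMap.trace ℂ V (ρ x⁻¹)
      = ∑ x : G, ∑ i : Fin n, ∑ j : Fin n, M x i i * M x⁻¹ j j := by
        refine Finset.sum_congr rfl fun x _ => ?_
        rw [hM, hM, Finset.sum_mul_sum]
    _ = ∑ i : Fin n, ∑ j : Fin n, ∑ x : G, M x i i * M x⁻¹ j j := by
        rw [Finset.sum_comm]
        refine Finset.sum_congr rfl fun i _ => Finset.sum_comm
    _ = ∑ i : Fin n, ∑ j : Fin n,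
          ((Fintype.card G : ℂ) * (if i = j then 1 else 0) / (n : ℂ)) *
            (if i = j then 1 else 0) := by
        refine Finset.sum_congr rfl fun i _ => Finset.sum_congr rfl fun j _ => key i j i j
    _ = ∑ i : Fin n, (Fintype.card G : ℂ) / (n : ℂ) := by
        refine Finset.sum_congr rfl fun i _ => ?_
        rw [Finset.sum_eq_single i]
        · simp
        · intro j _ hji; simp [hji, Ne.symm hji]
        · simp
    _ = (Fintype.card G : ℂ) := by
        rw [Finset.sum_const, Finset.card_univ, Fintype.card_fin, nsmul_eq_mul]
        field_simp

lemma my_conv1 (hirr : ∀ W : Submodule ℂ V, (∀ g : G, W.map (ρ g) ≤ W) → W = ⊥ ∨ W = ⊤)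
    (a c : G) :
    ∑ y : G, LinearMap.trace ℂ V (ρ (a * (y * c * y⁻¹))) =
      (Fintype.card G : ℂ) * LinearMap.trace ℂ V (ρ c) / (Module.finrank ℂ V : ℂ) *
        LinearMap.trace ℂ V (ρ a) := by
  have h := my_avg ρ hirr (ρ c)
  have h2 := congrArg (fun T => LinearMap.trace ℂ V (ρ a * T)) h
  simp only [Finset.mul_sum, map_sum, mul_smul_comm, map_smul, mul_one, smul_eq_mul] at h2
  have h3 : ∀ y : G, ρ a * (ρ y * ρ c * ρ y⁻¹) = ρ (a * (y * c * y⁻¹)) := by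
    intro y
    simp only [map_mul, mul_assoc]
  rw [← h2]
  refine Finset.sum_congr rfl fun y _ => ?_
  rw [h3]

lemma my_conv2 (hirr : ∀ W : Submodule ℂ V, (∀ g : G, W.map (ρ g) ≤ W) → W = ⊥ ∨ W = ⊤)
    (a : G) :
    ∑ x : G, LinearMap.trace ℂ V (ρ (a * x)) * LinearMap.trace ℂ V (ρ x⁻¹) =
      (Fintype.card G : ℂ) / (Module.finrank ℂ V : ℂ) * LinearMap.trace ℂ V (ρ a) := by
  have hn : ((Module.finrank ℂ V : ℂ)) ≠ 0 := by
    exact_mod_cast (Module.finrank_pos (R := ℂ) (M := V)).ne'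
  set T : V →ₗ[ℂ] V := ∑ x : G, LinearMap.trace ℂ V (ρ x⁻¹) • ρ x with hT
  have hcomm : ∀ g : G, ρ g * T = T * ρ g := by
    intro g
    rw [hT, Finset.mul_sum, Finset.sum_mul]
    refine Fintype.sum_bijective (MulAut.conj g).toEquiv (Equiv.bijective _) _ _ ?_
    intro x
    simp only [MulEquiv.toEquiv_eq_coe, MulEquiv.coe_toEquiv, MulAut.conj_apply]
    rw [mul_smul_comm, smul_mul_assoc, ← map_mul ρ, ← map_mul ρ]
    have e1 : g * x * g⁻¹ * g = g * x := by group
    have e2 : (g * x * g⁻¹)⁻¹ = g * x⁻¹ * g⁻¹ := by group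
    rw [e1, e2, my_class ρ g x⁻¹]
  obtain ⟨c, hc⟩ := my_schur ρ hirr T hcomm
  have htr : LinearMap.trace ℂ V T = (Fintype.card G : ℂ) := by
    rw [hT, map_sum]
    have h4 : ∀ x : G, LinearMap.trace ℂ V (LinearMap.trace ℂ V (ρ x⁻¹) • ρ x)
        = LinearMap.trace ℂ V (ρ x) * LinearMap.trace ℂ V (ρ x⁻¹) := by
      intro x
      rw [map_smul, smul_eq_mul, mul_comm]
    simp only [h4]
    exact my_orth ρ hirr
  have hcval : c = (Fintype.card G : ℂ) / (Module.finrank ℂ V : ℂ) := by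
    rw [hc, map_smul, LinearMap.trace_one, smul_eq_mul] at htr
    field_simp
    linear_combination htr
  have h5 : LinearMap.trace ℂ V (ρ a * T) = c * LinearMap.trace ℂ V (ρ a) := by
    rw [hc, mul_smul_comm, map_smul, smul_eq_mul, mul_one]
  rw [hT, Finset.mul_sum, map_sum] at h5
  have h6 : ∀ x : G, LinearMap.trace ℂ V (ρ a * (LinearMap.trace ℂ V (ρ x⁻¹) • ρ x))
      = LinearMap.trace ℂ V (ρ (a * x)) * LinearMap.trace ℂ V (ρ x⁻¹) := by
    intro x
    rw [mul_smul_comm, map_smul, smul_eq_mul, ← map_mul ρ, mul_comm]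
  simp only [h6] at h5
  rw [h5, hcval]

lemma my_central (hirr : ∀ W : Submodule ℂ V, (∀ g : G, W.map (ρ g) ≤ W) → W = ⊥ ∨ W = ⊤)
    (u : G) (hu : u ∈ Subgroup.center G) (x : G) :
    LinearMap.trace ℂ V (ρ (u * x)) =
      LinearMap.trace ℂ V (ρ u) * LinearMap.trace ℂ V (ρ x) / (Module.finrank ℂ V : ℂ) := by
  have hn : ((Module.finrank ℂ V : ℂ)) ≠ 0 := by
    exact_mod_cast (Module.finrank_pos (R := ℂ) (M := V)).ne'
  have hcomm : ∀ g : G, ρ g * ρ u = ρ u * ρ g := by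
    intro g
    rw [← map_mul ρ, ← map_mul ρ, (Subgroup.mem_center_iff.mp hu g)]
  obtain ⟨c, hc⟩ := my_schur ρ hirr (ρ u) hcomm
  have htr : LinearMap.trace ℂ V (ρ u) = c * (Module.finrank ℂ V : ℂ) := by
    rw [hc, map_smul, LinearMap.trace_one, smul_eq_mul]
  rw [map_mul ρ, hc, smul_mul_assoc, one_mul, map_smul, smul_eq_mul,
    map_smul, LinearMap.trace_one, smul_eq_mul]
  field_simp

lemma my_commsum (hirr : ∀ W : Submodule ℂ V, (∀ g : G, W.map (ρ g) ≤ W) → W = ⊥ ∨ W = ⊤)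
    (w v : G) :
    ∑ a : G, ∑ b : G, LinearMap.trace ℂ V (ρ (w * (a * b * a⁻¹ * b⁻¹) * v)) =
      ((Fintype.card G : ℂ) / (Module.finrank ℂ V : ℂ))^2 *
        LinearMap.trace ℂ V (ρ (w * v)) := by
  have step1 : ∀ a : G, ∑ b : G, LinearMap.trace ℂ V (ρ (w * (a * b * a⁻¹ * b⁻¹) * v)) =
      (Fintype.card G : ℂ) * LinearMap.trace ℂ V (ρ a⁻¹) / (Module.finrank ℂ V : ℂ) *
        LinearMap.trace ℂ V (ρ (v * w * a)) := by
    intro a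
    rw [← my_conv1 ρ hirr (v * w * a) a⁻¹]
    refine Finset.sum_congr rfl fun b _ => ?_
    rw [my_cyc ρ (w * (a * b * a⁻¹ * b⁻¹)) v]
    congr 1
    group
  simp only [step1]
  have step2 : ∑ a : G, (Fintype.card G : ℂ) * LinearMap.trace ℂ V (ρ a⁻¹) /
      (Module.finrank ℂ V : ℂ) * LinearMap.trace ℂ V (ρ (v * w * a)) =
      (Fintype.card G : ℂ) / (Module.finrank ℂ V : ℂ) *
        ∑ a : G, LinearMap.trace ℂ V (ρ (v * w * a)) * LinearMap.trace ℂ V (ρ a⁻¹) := by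
    rw [Finset.mul_sum]
    refine Finset.sum_congr rfl fun a _ => ?_
    ring
  rw [step2]
  have step3 : ∑ a : G, LinearMap.trace ℂ V (ρ (v * w * a)) * LinearMap.trace ℂ V (ρ a⁻¹) =
      (Fintype.card G : ℂ) / (Module.finrank ℂ V : ℂ) * LinearMap.trace ℂ V (ρ (v * w)) := by
    have := my_conv2 ρ hirr (v * w)
    simpa only [mul_assoc] using this
  rw [step3, my_cyc ρ v w]
  ring

lemma my_sum_cons (k : ℕ) (f : (Fin (k+1) → G) → ℂ) :
    ∑ x : Fin (k+1) → G, f x = ∑ a : G, ∑ x : Fin k → G, f (Fin.cons a x) := by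
  rw [← (Fin.consEquiv (fun _ : Fin (k+1) => G)).sum_comp f, Fintype.sum_prod_type]
  rfl

lemma my_prod_cons (k : ℕ) (x y : Fin k → G) (a b : G) :
    (List.ofFn fun i : Fin (k+1) =>
        Fin.cons (α := fun _ => G) a x i * Fin.cons (α := fun _ => G) b y i *
          (Fin.cons (α := fun _ => G) a x i)⁻¹ * (Fin.cons (α := fun _ => G) b y i)⁻¹).prod
      = (a * b * a⁻¹ * b⁻¹) *
        (List.ofFn fun i : Fin k => x i * y i * (x i)⁻¹ * (y i)⁻¹).prod := by
  rw [List.ofFn_succ]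
  simp [Fin.cons_zero, Fin.cons_succ]

lemma my_H (ρ : Representation ℂ G V)
    (hirr : ∀ W : Submodule ℂ V, (∀ g : G, W.map (ρ g) ≤ W) → W = ⊥ ∨ W = ⊤)
    (k : ℕ) (v : G) : ∀ w : G,
    ∑ x : Fin k → G, ∑ y : Fin k → G,
      LinearMap.trace ℂ V
        (ρ (w * (List.ofFn fun i : Fin k => x i * y i * (x i)⁻¹ * (y i)⁻¹).prod * v)) =
      ((Fintype.card G : ℂ) / (Module.finrank ℂ V : ℂ))^(2*k) *
        LinearMap.trace ℂ V (ρ (w * v)) := by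
  induction k with
  | zero =>
      intro w
      simp
  | succ k ih =>
      intro w
      rw [my_sum_cons (G := G) k]
      have hy : ∀ (a : G) (x' : Fin k → G),
          ∑ y : Fin (k+1) → G, LinearMap.trace ℂ V
            (ρ (w * (List.ofFn fun i : Fin (k+1) =>
              Fin.cons (α := fun _ => G) a x' i * y i *
                (Fin.cons (α := fun _ => G) a x' i)⁻¹ * (y i)⁻¹).prod * v)) =
          ∑ b : G, ∑ y' : Fin k → G, LinearMap.trace ℂ V
            (ρ ((w * (a * b * a⁻¹ * b⁻¹)) *
              (List.ofFn fun i : Fin k => x' i * y' i * (x' i)⁻¹ * (y' i)⁻¹).prod * v)) := by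
        intro a x'
        rw [my_sum_cons (G := G) k]
        refine Finset.sum_congr rfl fun b _ => Finset.sum_congr rfl fun y' _ => ?_
        rw [my_prod_cons]
        congr 2
        simp only [mul_assoc]
      simp only [hy]
      have swap : ∀ a : G,
          ∑ x' : Fin k → G, ∑ b : G, ∑ y' : Fin k → G, LinearMap.trace ℂ V
            (ρ ((w * (a * b * a⁻¹ * b⁻¹)) *
              (List.ofFn fun i : Fin k => x' i * y' i * (x' i)⁻¹ * (y' i)⁻¹).prod * v)) =
          ∑ b : G, ∑ x' : Fin k → G, ∑ y' : Fin k → G, LinearMap.trace ℂ V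
            (ρ ((w * (a * b * a⁻¹ * b⁻¹)) *
              (List.ofFn fun i : Fin k => x' i * y' i * (x' i)⁻¹ * (y' i)⁻¹).prod * v)) :=
        fun a => Finset.sum_comm
      simp only [swap]
      have hih : ∀ a b : G,
          ∑ x' : Fin k → G, ∑ y' : Fin k → G, LinearMap.trace ℂ V
            (ρ ((w * (a * b * a⁻¹ * b⁻¹)) *
              (List.ofFn fun i : Fin k => x' i * y' i * (x' i)⁻¹ * (y' i)⁻¹).prod * v)) =
          ((Fintype.card G : ℂ) / (Module.finrank ℂ V : ℂ))^(2*k) *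
            LinearMap.trace ℂ V (ρ (w * (a * b * a⁻¹ * b⁻¹) * v)) := by
        intro a b
        rw [ih (w * (a * b * a⁻¹ * b⁻¹))]
      simp only [hih, ← Finset.mul_sum]
      rw [my_commsum ρ hirr w v]
      ring
end



/-- Finite-group form of the Wilson-line expectation for a non-contractible,
homologically non-trivial loop on a genus-`g` surface, on a bundle of topological
type `u` (an element of the center):
`(1/|G|^{2g}) ∑_{x,y} χ_σ(x₁) χ_μ((∏ᵢ xᵢ yᵢ xᵢ⁻¹ yᵢ⁻¹) u⁻¹) = m χ_μ(u⁻¹)/d_μ^{2g}`,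
where `m = (1/|G|) ∑_x χ_σ(x) χ_μ(x) χ_μ(x⁻¹)` is the Clebsch–Gordan coefficient. -/
theorem finite_wilson_line_noncontractible
    {G : Type*} [Group G] [Fintype G]
    {Vσ : Type*} [AddCommGroup Vσ] [Module ℂ Vσ] [FiniteDimensional ℂ Vσ]
    [Nontrivial Vσ]
    {Vμ : Type*} [AddCommGroup Vμ] [Module ℂ Vμ] [FiniteDimensional ℂ Vμ]
    [Nontrivial Vμ]
    (ρσ : Representation ℂ G Vσ) (ρμ : Representation ℂ G Vμ)
    (hirrσ : ∀ W : Submodule ℂ Vσ, (∀ g : G, W.map (ρσ g) ≤ W) → W = ⊥ ∨ W = ⊤)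
    (hirrμ : ∀ W : Submodule ℂ Vμ, (∀ g : G, W.map (ρμ g) ≤ W) → W = ⊥ ∨ W = ⊤)
    (χσ χμ : G → ℂ)
    (hχσ : ∀ g, χσ g = LinearMap.trace ℂ Vσ (ρσ g))
    (hχμ : ∀ g, χμ g = LinearMap.trace ℂ Vμ (ρμ g))
    (u : G) (hu : u ∈ Subgroup.center G)
    (g : ℕ) (hg : 0 < g)
    (m : ℂ) (hm : m = (1 / (Fintype.card G : ℂ)) * ∑ x : G, χσ x * χμ x * χμ x⁻¹) :
    (1 / (Fintype.card G : ℂ) ^ (2 * g)) *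
        ∑ x : Fin g → G, ∑ y : Fin g → G,
          χσ (x ⟨0, hg⟩) *
            χμ ((List.ofFn fun i : Fin g => x i * y i * (x i)⁻¹ * (y i)⁻¹).prod * u⁻¹) =
      m * χμ u⁻¹ / χμ 1 ^ (2 * g) := by
  obtain ⟨k, rfl⟩ : ∃ k, g = k + 1 := ⟨g - 1, (Nat.succ_pred_eq_of_pos hg).symm⟩
  have hcard : ((Fintype.card G : ℂ)) ≠ 0 := by
    exact_mod_cast Fintype.card_pos.ne'
  have hn : ((Module.finrank ℂ Vμ : ℂ)) ≠ 0 := by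
    exact_mod_cast (Module.finrank_pos (R := ℂ) (M := Vμ)).ne'
  simp only [hχσ, hχμ, map_one, LinearMap.trace_one]
  set C : ℂ := (Fintype.card G : ℂ) with hC
  set N : ℂ := (Module.finrank ℂ Vμ : ℂ) with hN
  have hm' : ∑ a : G, LinearMap.trace ℂ Vσ (ρσ a) * LinearMap.trace ℂ Vμ (ρμ a) *
      LinearMap.trace ℂ Vμ (ρμ a⁻¹) = C * m := by
    rw [hm]
    simp only [hχσ, hχμ]
    field_simp
  have inner : ∀ a : G,
      ∑ x' : Fin k → G, ∑ b : G, ∑ y' : Fin k → G,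
        LinearMap.trace ℂ Vμ (ρμ ((a * b * a⁻¹ * b⁻¹ *
          (List.ofFn fun i : Fin k => x' i * y' i * (x' i)⁻¹ * (y' i)⁻¹).prod) * u⁻¹)) =
      (C / N) ^ (2 * k) * (C * LinearMap.trace ℂ Vμ (ρμ a⁻¹) / N) *
        (LinearMap.trace ℂ Vμ (ρμ u⁻¹) * LinearMap.trace ℂ Vμ (ρμ a) / N) := by
    intro a
    rw [Finset.sum_comm]
    have h1 : ∀ b : G,
        ∑ x' : Fin k → G, ∑ y' : Fin k → G,
          LinearMap.trace ℂ Vμ (ρμ ((a * b * a⁻¹ * b⁻¹ *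
            (List.ofFn fun i : Fin k => x' i * y' i * (x' i)⁻¹ * (y' i)⁻¹).prod) * u⁻¹)) =
        (C / N) ^ (2 * k) * LinearMap.trace ℂ Vμ (ρμ (a * b * a⁻¹ * b⁻¹ * u⁻¹)) := by
      intro b
      have := my_H ρμ hirrμ k u⁻¹ (a * b * a⁻¹ * b⁻¹)
      rw [← this]
    simp only [h1, ← Finset.mul_sum]
    have h2 : ∑ b : G, LinearMap.trace ℂ Vμ (ρμ (a * b * a⁻¹ * b⁻¹ * u⁻¹)) =
        ∑ b : G, LinearMap.trace ℂ Vμ (ρμ ((u⁻¹ * a) * (b * a⁻¹ * b⁻¹))) := by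
      refine Finset.sum_congr rfl fun b _ => ?_
      rw [my_cyc ρμ (a * b * a⁻¹ * b⁻¹) u⁻¹]
      congr 1
      group
    rw [h2, my_conv1 ρμ hirrμ (u⁻¹ * a) a⁻¹,
      my_central ρμ hirrμ u⁻¹ ((Subgroup.center G).inv_mem hu) a]
    ring
  rw [my_sum_cons (G := G) k]
  have step : ∀ a : G,
      ∑ x' : Fin k → G, ∑ y : Fin (k+1) → G,
        LinearMap.trace ℂ Vσ (ρσ (Fin.cons (α := fun _ => G) a x' ⟨0, hg⟩)) *
          LinearMap.trace ℂ Vμ (ρμ ((List.ofFn fun i : Fin (k+1) =>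
            Fin.cons (α := fun _ => G) a x' i * y i *
              (Fin.cons (α := fun _ => G) a x' i)⁻¹ * (y i)⁻¹).prod * u⁻¹)) =
      LinearMap.trace ℂ Vσ (ρσ a) *
        ((C / N) ^ (2 * k) * (C * LinearMap.trace ℂ Vμ (ρμ a⁻¹) / N) *
          (LinearMap.trace ℂ Vμ (ρμ u⁻¹) * LinearMap.trace ℂ Vμ (ρμ a) / N)) := by
    intro a
    have peel : ∀ x' : Fin k → G,
        ∑ y : Fin (k+1) → G,
          LinearMap.trace ℂ Vσ (ρσ (Fin.cons (α := fun _ => G) a x' ⟨0, hg⟩)) *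
            LinearMap.trace ℂ Vμ (ρμ ((List.ofFn fun i : Fin (k+1) =>
              Fin.cons (α := fun _ => G) a x' i * y i *
                (Fin.cons (α := fun _ => G) a x' i)⁻¹ * (y i)⁻¹).prod * u⁻¹)) =
        LinearMap.trace ℂ Vσ (ρσ a) * ∑ b : G, ∑ y' : Fin k → G,
          LinearMap.trace ℂ Vμ (ρμ ((a * b * a⁻¹ * b⁻¹ *
            (List.ofFn fun i : Fin k => x' i * y' i * (x' i)⁻¹ * (y' i)⁻¹).prod) * u⁻¹)) := by
      intro x'
      rw [my_sum_cons (G := G) k, Finset.mul_sum]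
      refine Finset.sum_congr rfl fun b _ => ?_
      rw [Finset.mul_sum]
      refine Finset.sum_congr rfl fun y' _ => ?_
      have e1 : Fin.cons (α := fun _ => G) a x' (⟨0, hg⟩ : Fin (k+1)) = a := rfl
      rw [e1, my_prod_cons]
    simp only [peel]
    rw [← Finset.mul_sum, inner a]
  simp only [step]
  have collect : ∑ a : G, LinearMap.trace ℂ Vσ (ρσ a) *
      ((C / N) ^ (2 * k) * (C * LinearMap.trace ℂ Vμ (ρμ a⁻¹) / N) *
        (LinearMap.trace ℂ Vμ (ρμ u⁻¹) * LinearMap.trace ℂ Vμ (ρμ a) / N)) =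
      (C / N) ^ (2 * k) * (C / N) * (LinearMap.trace ℂ Vμ (ρμ u⁻¹) / N) * (C * m) := by
    rw [← hm', Finset.mul_sum]
    refine Finset.sum_congr rfl fun a _ => ?_
    ring
  rw [collect]
  have hexp : 2 * (k + 1) = (2 * k) + 2 := by ring
  rw [hexp, pow_add, pow_add, div_pow]
  have hCp : C ^ (2*k) ≠ 0 := pow_ne_zero _ hcard
  have hNp : N ^ (2*k) ≠ 0 := pow_ne_zero _ hn
  field_simp
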